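/- In the covariant causet with shell sequence (1,2,3,4,5,4,3,2,1) and labels assigned shell-by-shell, the geodesic distance from vertex 1 to vertex 11 is √26, and there are exactly 3 geodesics from 1 to 11, so the curvature K(11) = 2. -/

import Mathlib

/-- The shell function of the covariant causet with shell sequence
`(1,2,3,4,5,4,3,2,1)`, with vertices labeled shell by shell (0-indexed:
vertex `i` here corresponds to the paper's vertex `i+1`). -/
def shell25 (i : Fin 25) : ℕ :=
  if (i : ℕ) < 1 then 0
  else if (i : ℕ) < 3 then 1
  else if (i : ℕ) < 6 then 2
  else if (i : ℕ) < 10 then 3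
  else if (i : ℕ) < 15 then 4
  else if (i : ℕ) < 19 then 5
  else if (i : ℕ) < 22 then 6
  else if (i : ℕ) < 24 then 7
  else 8

/-- `j` is a child of `i`: `j` lies in the shell just after that of `i`. -/
def parent25 (i j : Fin 25) : Prop := shell25 j = shell25 i + 1

/-- A path from `a` to `b`: a parent-child chain starting at `a`, ending at `b`. -/
def IsPath25 (a b : Fin 25) (p : List (Fin 25)) : Prop :=
  p.Chain' parent25 ∧ p.head? = some a ∧ p.getLast? = some b

/-- Path length `(Σ (i_j − i_{j−1})²)^{1/2}` computed from the labels. -/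
noncomputable def len25 (p : List (Fin 25)) : ℝ :=
  Real.sqrt (((p.zip p.tail).map fun q =>
    (((q.2 : ℕ) : ℝ) - ((q.1 : ℕ) : ℝ)) ^ 2).sum)

/-- A geodesic: a path of minimal length between its endpoints. -/
def IsGeo25 (a b : Fin 25) (p : List (Fin 25)) : Prop :=
  IsPath25 a b p ∧ ∀ q : List (Fin 25), IsPath25 a b q → len25 p ≤ len25 q

/-- The geodesic distance from `a` to `b`. -/
noncomputable def dist25 (a b : Fin 25) : ℝ :=
  sInf (len25 '' {p | IsPath25 a b p})

/-- In the causet with shell sequence `(1,2,3,4,5,4,3,2,1)`, the distance from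
vertex 1 to vertex 11 (labels `0` and `10` here) is `√26`, the geodesics are
exactly `1–3–6–8–11`, `1–3–5–8–11`, `1–3–6–9–11`, and the curvature
`K(11) = (number of geodesics) − 1 = 2`. -/
instance : DecidablePred (fun q : Fin 25 × Fin 25 => parent25 q.1 q.2) := by
  intro q; unfold parent25; infer_instance

instance (i j : Fin 25) : Decidable (parent25 i j) := by unfold parent25; infer_instance

lemma chain_last : ∀ (t : List (Fin 25)) (a : Fin 25), (a :: t).Chain' parent25 →
    shell25 ((a :: t).getLast (List.cons_ne_nil a t)) = shell25 a + t.length := by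
  intro t
  induction t with
  | nil => intro a _; simp
  | cons v t ih =>
    intro a h
    rw [List.Chain', List.isChain_cons_cons] at h
    have := ih v h.2
    rw [List.getLast_cons (List.cons_ne_nil v t)]
    rw [this, h.1]
    simp; ring

lemma sh1 : ∀ v : Fin 25, shell25 v = 1 ↔ (v = 1 ∨ v = 2) := by decide
lemma sh2 : ∀ v : Fin 25, shell25 v = 2 ↔ (v = 3 ∨ v = 4 ∨ v = 5) := by decide
lemma sh3 : ∀ v : Fin 25, shell25 v = 3 ↔ (v = 6 ∨ v = 7 ∨ v = 8 ∨ v = 9) := by decide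

lemma path_char (p : List (Fin 25)) : IsPath25 0 10 p ↔
    ∃ a b c : Fin 25, (a = 1 ∨ a = 2) ∧ (b = 3 ∨ b = 4 ∨ b = 5) ∧
      (c = 6 ∨ c = 7 ∨ c = 8 ∨ c = 9) ∧ p = [0, a, b, c, 10] := by
  constructor
  · rintro ⟨hc, hh, hl⟩
    rcases p with _ | ⟨x, t⟩
    · simp at hh
    · simp at hh; subst hh
      have hlen : t.length = 4 := by
        have h1 := chain_last t 0 hc
        have h2 : (0 :: t : List (Fin 25)).getLast (List.cons_ne_nil _ _) = 10 := by
          rwa [List.getLast?_eq_getLast (List.cons_ne_nil _ _), Option.some_inj] at hl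
        rw [h2] at h1
        have : shell25 (10 : Fin 25) = 4 := by decide
        have : shell25 (0 : Fin 25) = 0 := by decide
        omega
      rcases t with _ | ⟨v1, t⟩; · simp at hlen
      rcases t with _ | ⟨v2, t⟩; · simp at hlen
      rcases t with _ | ⟨v3, t⟩; · simp at hlen
      rcases t with _ | ⟨v4, t⟩; · simp at hlen
      rcases t with _ | ⟨v5, t⟩; swap; · simp at hlen
      simp only [List.Chain', List.isChain_cons_cons, List.isChain_singleton, and_true] at hc
      obtain ⟨h01, h12, h23, h34⟩ := hc
      have e1 : shell25 v1 = 1 := by rw [h01]; decide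
      rw [sh1] at e1
      have e2 : shell25 v2 = 2 := by rw [h12]; rcases e1 with rfl | rfl <;> decide
      rw [sh2] at e2
      have e3 : shell25 v3 = 3 := by rw [h23]; rcases e2 with rfl | rfl | rfl <;> decide
      rw [sh3] at e3
      have hv4 : v4 = 10 := by simpa using hl
      exact ⟨v1, v2, v3, e1, e2, e3, by rw [hv4]⟩
  · rintro ⟨a, b, c, ha, hb, hc, rfl⟩
    refine ⟨?_, rfl, rfl⟩
    simp only [List.Chain', List.isChain_cons_cons, List.isChain_singleton, and_true]
    rcases ha with rfl | rfl <;> rcases hb with rfl | rfl | rfl <;>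
      rcases hc with rfl | rfl | rfl | rfl <;> exact ⟨by decide, by decide, by decide, by decide⟩

lemma len5 (a b c d e : Fin 25) : len25 [a, b, c, d, e] =
    Real.sqrt ((((b:ℕ):ℝ) - ((a:ℕ):ℝ))^2 + (((c:ℕ):ℝ) - ((b:ℕ):ℝ))^2 +
      (((d:ℕ):ℝ) - ((c:ℕ):ℝ))^2 + (((e:ℕ):ℝ) - ((d:ℕ):ℝ))^2) := by
  simp [len25]; ring_nf


lemma cv1 : (((1:Fin 25)):ℕ) = 1 := rfl
lemma cv2 : (((2:Fin 25)):ℕ) = 2 := rfl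
lemma cv3 : (((3:Fin 25)):ℕ) = 3 := rfl
lemma cv4 : (((4:Fin 25)):ℕ) = 4 := rfl
lemma cv5 : (((5:Fin 25)):ℕ) = 5 := rfl
lemma cv6 : (((6:Fin 25)):ℕ) = 6 := rfl
lemma cv7 : (((7:Fin 25)):ℕ) = 7 := rfl
lemma cv8 : (((8:Fin 25)):ℕ) = 8 := rfl
lemma cv9 : (((9:Fin 25)):ℕ) = 9 := rfl
lemma cv10 : (((10:Fin 25)):ℕ) = 10 := rfl

lemma lenval : len25 [0, 2, 5, 7, 10] = Real.sqrt 26 := by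
  rw [len5]; norm_num [cv1,cv2,cv3,cv4,cv5,cv6,cv7,cv8,cv9,cv10]

lemma min26 : ∀ q : List (Fin 25), IsPath25 0 10 q → Real.sqrt 26 ≤ len25 q := by
  intro q hq
  rw [path_char] at hq
  obtain ⟨a, b, c, ha, hb, hc, rfl⟩ := hq
  rcases ha with rfl | rfl <;> rcases hb with rfl | rfl | rfl <;>
    rcases hc with rfl | rfl | rfl | rfl <;>
    · rw [len5]; apply Real.sqrt_le_sqrt; norm_num [cv1,cv2,cv3,cv4,cv5,cv6,cv7,cv8,cv9,cv10]

lemma path1 : IsPath25 0 10 [0, 2, 5, 7, 10] := by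
  refine ⟨?_, rfl, rfl⟩
  simp only [List.Chain', List.isChain_cons_cons, List.isChain_singleton, and_true]
  exact ⟨by decide, by decide, by decide, by decide⟩

lemma path2 : IsPath25 0 10 [0, 2, 4, 7, 10] := by
  refine ⟨?_, rfl, rfl⟩
  simp only [List.Chain', List.isChain_cons_cons, List.isChain_singleton, and_true]
  exact ⟨by decide, by decide, by decide, by decide⟩

lemma path3 : IsPath25 0 10 [0, 2, 5, 8, 10] := by
  refine ⟨?_, rfl, rfl⟩
  simp only [List.Chain', List.isChain_cons_cons, List.isChain_singleton, and_true]
  exact ⟨by decide, by decide, by decide, by decide⟩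

theorem dist_and_curvature_vertex11 :
    dist25 0 10 = Real.sqrt 26 ∧
    {p : List (Fin 25) | IsGeo25 0 10 p} =
      {[0, 2, 5, 7, 10], [0, 2, 4, 7, 10], [0, 2, 5, 8, 10]} ∧
    Nat.card {p : List (Fin 25) // IsGeo25 0 10 p} - 1 = 2 := by
  have hdist : dist25 0 10 = Real.sqrt 26 := by
    apply le_antisymm
    · apply csInf_le
      · exact ⟨0, by rintro x ⟨p, _, rfl⟩; exact Real.sqrt_nonneg _⟩
      · exact ⟨[0, 2, 5, 7, 10], path1, lenval⟩
    · apply le_csInf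
      · exact ⟨_, [0, 2, 5, 7, 10], path1, rfl⟩
      · rintro x ⟨p, hp, rfl⟩; exact min26 p hp
  have hset : {p : List (Fin 25) | IsGeo25 0 10 p} =
      {[0, 2, 5, 7, 10], [0, 2, 4, 7, 10], [0, 2, 5, 8, 10]} := by
    ext p
    simp only [Set.mem_setOf_eq, Set.mem_insert_iff, Set.mem_singleton_iff]
    constructor
    · rintro ⟨hp, hmin⟩
      have hle : len25 p ≤ Real.sqrt 26 := lenval ▸ hmin _ path1
      rw [path_char] at hp
      obtain ⟨a, b, c, ha, hb, hc, rfl⟩ := hp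
      rcases ha with rfl | rfl <;> rcases hb with rfl | rfl | rfl <;>
        rcases hc with rfl | rfl | rfl | rfl <;>
        first
          | exact Or.inl rfl
          | exact Or.inr (Or.inl rfl)
          | exact Or.inr (Or.inr rfl)
          | (exfalso
             rw [len5] at hle
             norm_num [cv1,cv2,cv3,cv4,cv5,cv6,cv7,cv8,cv9,cv10] at hle
             nlinarith [Real.sq_sqrt (show (0:ℝ) ≤ 26 by norm_num), Real.sqrt_nonneg 26])
          | (exfalso
             rw [len5] at hle
             norm_num [cv1,cv2,cv3,cv4,cv5,cv6,cv7,cv8,cv9,cv10] at hle)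
    · rintro (rfl | rfl | rfl)
      · exact ⟨path1, fun q hq => lenval ▸ min26 q hq⟩
      · refine ⟨path2, fun q hq => ?_⟩
        have : len25 [0, 2, 4, 7, 10] = Real.sqrt 26 := by rw [len5]; norm_num [cv1,cv2,cv3,cv4,cv5,cv6,cv7,cv8,cv9,cv10]
        rw [this]; exact min26 q hq
      · refine ⟨path3, fun q hq => ?_⟩
        have : len25 [0, 2, 5, 8, 10] = Real.sqrt 26 := by rw [len5]; norm_num [cv1,cv2,cv3,cv4,cv5,cv6,cv7,cv8,cv9,cv10]
        rw [this]; exact min26 q hq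
  refine ⟨hdist, hset, ?_⟩
  have hiff : ∀ p : List (Fin 25), IsGeo25 0 10 p ↔
      p ∈ ({[0, 2, 5, 7, 10], [0, 2, 4, 7, 10], [0, 2, 5, 8, 10]} : Set (List (Fin 25))) :=
    Set.ext_iff.mp hset
  rw [Nat.card_congr (Equiv.subtypeEquivRight hiff), Nat.card_coe_set_eq]
  rw [Set.ncard_insert_of_notMem (by simp), Set.ncard_insert_of_notMem (by simp),
    Set.ncard_singleton]
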